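/- Let K, L be convex bodies in ℝ³ containing the origin in their interiors. If K is in the class ℜ₁ with respect to L, then for every t ≥ 0, K is in the class ℜ₁ with respect to L + tK; explicitly, if the relative quermassintegrals of K with respect to L are W₀, W₁, W₂, W₃ and B₀(r) = 2W₁ r − W₀ − W₂ r² ≥ 0 on [r_o(K,L), R_o(K,L)], then 2W₁' r − W₀ − W₂' r² ≥ 0 for all r ∈ [r_o(K, L+tK), R_o(K, L+tK)], where W₁' = W₁ + t V(K) and W₂' = W₂ + 2t W₁ + t² V(K) are the first and second relative quermassintegrals of K with respect to L + tK. -/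

import Mathlib

open scoped Pointwise RealInnerProductSpace
open MeasureTheory Metric

noncomputable section

/-- The support function `h_K(u) = sup_{x ∈ K} ⟨x, u⟩` of a set `K ⊆ ℝ³`. -/
def supp (K : Set (EuclideanSpace ℝ (Fin 3))) (u : EuclideanSpace ℝ (Fin 3)) : ℝ :=
  sSup ((fun x => ⟪x, u⟫) '' K)

/-- `r_o(K,L) = min_{u ∈ S²} h_K(u)/h_L(u)`. -/
def rIn (K L : Set (EuclideanSpace ℝ (Fin 3))) : ℝ :=
  sInf ((fun u => supp K u / supp L u) '' sphere (0 : EuclideanSpace ℝ (Fin 3)) 1)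

/-- `R_o(K,L) = max_{u ∈ S²} h_K(u)/h_L(u)`. -/
def rOut (K L : Set (EuclideanSpace ℝ (Fin 3))) : ℝ :=
  sSup ((fun u => supp K u / supp L u) '' sphere (0 : EuclideanSpace ℝ (Fin 3)) 1)

lemma bddAbove_img {K : Set (EuclideanSpace ℝ (Fin 3))} (hK : IsCompact K)
    (u : EuclideanSpace ℝ (Fin 3)) : BddAbove ((fun x => ⟪x, u⟫) '' K) :=
  (hK.image (continuous_id.inner continuous_const)).bddAbove

lemma le_supp {K : Set (EuclideanSpace ℝ (Fin 3))} (hK : IsCompact K)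
    {x : EuclideanSpace ℝ (Fin 3)} (hx : x ∈ K) (u : EuclideanSpace ℝ (Fin 3)) :
    ⟪x, u⟫ ≤ supp K u :=
  le_csSup (bddAbove_img hK u) (Set.mem_image_of_mem _ hx)

lemma supp_pos {K : Set (EuclideanSpace ℝ (Fin 3))} (hK : IsCompact K)
    {ε : ℝ} (hε : 0 < ε) (hball : ball (0 : EuclideanSpace ℝ (Fin 3)) ε ⊆ K)
    {u : EuclideanSpace ℝ (Fin 3)} (hu : u ∈ sphere (0 : EuclideanSpace ℝ (Fin 3)) 1) :
    ε / 2 ≤ supp K u := by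
  have hu1 : ‖u‖ = 1 := by simpa using hu
  have hmem : (ε / 2) • u ∈ K := by
    apply hball
    simp only [mem_ball, dist_zero_right, norm_smul, hu1, mul_one, Real.norm_eq_abs]
    rw [abs_of_pos (half_pos hε)]
    exact half_lt_self hε
  have h2 := le_supp hK hmem u
  rw [real_inner_smul_left, real_inner_self_eq_norm_sq, hu1] at h2
  linarith

lemma supp_le_of_subset_closedBall {K : Set (EuclideanSpace ℝ (Fin 3))}
    (hKne : K.Nonempty) {M : ℝ}
    (hM : K ⊆ closedBall (0 : EuclideanSpace ℝ (Fin 3)) M)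
    {u : EuclideanSpace ℝ (Fin 3)} (hu : u ∈ sphere (0 : EuclideanSpace ℝ (Fin 3)) 1) :
    supp K u ≤ M := by
  have hu1 : ‖u‖ = 1 := by simpa using hu
  apply csSup_le (hKne.image _)
  rintro y ⟨x, hx, rfl⟩
  calc ⟪x, u⟫ ≤ ‖x‖ * ‖u‖ := real_inner_le_norm x u
    _ ≤ M := by
        have : ‖x‖ ≤ M := by simpa [dist_zero_right] using hM hx
        rw [hu1]; simpa using this

lemma supp_add_smul {K L : Set (EuclideanSpace ℝ (Fin 3))}
    (hLc : IsCompact L) (hLne : L.Nonempty) (hKc : IsCompact K) (hKne : K.Nonempty)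
    {t : ℝ} (ht : 0 ≤ t) (u : EuclideanSpace ℝ (Fin 3)) :
    supp (L + t • K) u = supp L u + t * supp K u := by
  have hcoe : (⇑((innerSL ℝ) u) : EuclideanSpace ℝ (Fin 3) → ℝ) = fun x => ⟪x, u⟫ := by
    funext x
    rw [innerSL_apply_apply]
    exact real_inner_comm x u
  have hAL : BddAbove (⇑((innerSL ℝ) u) '' L) := by rw [hcoe]; exact bddAbove_img hLc u
  have hAK : BddAbove (⇑((innerSL ℝ) u) '' K) := by rw [hcoe]; exact bddAbove_img hKc u
  unfold supp
  rw [← hcoe, Set.image_add ((innerSL ℝ) u), image_smul_set ((innerSL ℝ) u),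
    csSup_add (hLne.image _) hAL ((hKne.image _).smul_set) (hAK.smul_of_nonneg ht),
    Real.sSup_smul_of_nonneg ht, smul_eq_mul]

/-- If `K` is in the class `ℜ₁` with respect to `L`, then for every `t ≥ 0`,
`K` is in the class `ℜ₁` with respect to `L + tK`, whose first and second relative
quermassintegrals are `W₁' = W₁ + t V(K)` and `W₂' = W₂ + 2t W₁ + t² V(K)`. -/
theorem class_R1_wrt_outer_parallel_body
    (K L : Set (EuclideanSpace ℝ (Fin 3)))
    (hKc : IsCompact K) (hKconv : Convex ℝ K) (hKint : (interior K).Nonempty)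
    (hLc : IsCompact L) (hLconv : Convex ℝ L) (hLint : (interior L).Nonempty)
    (hK0 : (0 : EuclideanSpace ℝ (Fin 3)) ∈ interior K)
    (hL0 : (0 : EuclideanSpace ℝ (Fin 3)) ∈ interior L)
    (W₀ W₁ W₂ W₃ : ℝ)
    (hW : ∀ t : ℝ, 0 ≤ t →
      (volume (K + t • L)).toReal = W₀ + 3 * W₁ * t + 3 * W₂ * t ^ 2 + W₃ * t ^ 3)
    (hR1 : ∀ r ∈ Set.Icc (rIn K L) (rOut K L), 2 * W₁ * r - W₀ - W₂ * r ^ 2 ≥ 0) :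
    ∀ t : ℝ, 0 ≤ t →
      ∀ r ∈ Set.Icc (rIn K (L + t • K)) (rOut K (L + t • K)),
        2 * (W₁ + t * (volume K).toReal) * r - W₀
            - (W₂ + 2 * t * W₁ + t ^ 2 * (volume K).toReal) * r ^ 2 ≥ 0 := by
  intro t ht r' hr'
  have hKne : K.Nonempty := hKint.mono interior_subset
  have hLne : L.Nonempty := hLint.mono interior_subset
  obtain ⟨εK, hεK, hballK⟩ := Metric.mem_nhds_iff.mp (mem_interior_iff_mem_nhds.mp hK0)
  obtain ⟨εL, hεL, hballL⟩ := Metric.mem_nhds_iff.mp (mem_interior_iff_mem_nhds.mp hL0)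
  obtain ⟨M, hM⟩ := hKc.isBounded.subset_closedBall 0
  have hM0 : 0 ≤ M := by
    obtain ⟨x, hx⟩ := hKne
    have := hM hx
    simp only [mem_closedBall, dist_zero_right] at this
    exact le_trans (norm_nonneg x) this
  have hsph : (sphere (0 : EuclideanSpace ℝ (Fin 3)) 1).Nonempty :=
    NormedSpace.sphere_nonempty.mpr zero_le_one
  have hSmemb : ∀ u ∈ sphere (0 : EuclideanSpace ℝ (Fin 3)) 1,
      0 < supp K u ∧ 0 < supp L u ∧ supp K u ≤ M := fun u hu =>
    ⟨lt_of_lt_of_le (by positivity) (supp_pos hKc hεK hballK hu),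
      lt_of_lt_of_le (by positivity) (supp_pos hLc hεL hballL hu),
      supp_le_of_subset_closedBall hKne hM hu⟩
  set S := (fun u => supp K u / supp L u) '' sphere (0 : EuclideanSpace ℝ (Fin 3)) 1 with hSdef
  have hBddA : BddAbove S := by
    refine ⟨M / (εL / 2), ?_⟩
    rintro y ⟨u, hu, rfl⟩
    obtain ⟨hK', hL', hM'⟩ := hSmemb u hu
    exact div_le_div₀ hM0 hM' (half_pos hεL) (supp_pos hLc hεL hballL hu)
  have hBddB : BddBelow S := by
    refine ⟨0, ?_⟩
    rintro y ⟨u, hu, rfl⟩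
    obtain ⟨hK', hL', -⟩ := hSmemb u hu
    exact div_nonneg hK'.le hL'.le
  have hSne : S.Nonempty := hsph.image _
  have hi0 : 0 ≤ rIn K L := by
    apply le_csInf hSne
    rintro y ⟨u, hu, rfl⟩
    obtain ⟨hK', hL', -⟩ := hSmemb u hu
    exact div_nonneg hK'.le hL'.le
  have hR0 : 0 ≤ rOut K L := by
    obtain ⟨u, hu⟩ := hsph
    obtain ⟨hK', hL', -⟩ := hSmemb u hu
    exact le_trans (div_nonneg hK'.le hL'.le) (le_csSup hBddA ⟨u, hu, rfl⟩)
  have h1R : (0:ℝ) < 1 + t * rOut K L := by nlinarith [mul_nonneg ht hR0]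
  have h1i : (0:ℝ) < 1 + t * rIn K L := by nlinarith [mul_nonneg ht hi0]
  -- bounds on the new ratios
  have hrOut' : rOut K (L + t • K) ≤ rOut K L / (1 + t * rOut K L) := by
    apply csSup_le (hsph.image _)
    rintro y ⟨u, hu, rfl⟩
    obtain ⟨haK, haL, -⟩ := hSmemb u hu
    have hs : supp K u / supp L u ≤ rOut K L := le_csSup hBddA ⟨u, hu, rfl⟩
    have hab : supp K u ≤ rOut K L * supp L u := (div_le_iff₀ haL).mp hs
    show supp K u / supp (L + t • K) u ≤ rOut K L / (1 + t * rOut K L)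
    rw [supp_add_smul hLc hLne hKc hKne ht u,
      div_le_div_iff₀ (by nlinarith [mul_nonneg ht haK.le]) h1R]
    nlinarith [mul_nonneg ht haK.le]
  have hrIn' : rIn K L / (1 + t * rIn K L) ≤ rIn K (L + t • K) := by
    apply le_csInf (hsph.image _)
    rintro y ⟨u, hu, rfl⟩
    obtain ⟨haK, haL, -⟩ := hSmemb u hu
    have hs : rIn K L ≤ supp K u / supp L u := csInf_le hBddB ⟨u, hu, rfl⟩
    have hab : rIn K L * supp L u ≤ supp K u := (le_div_iff₀ haL).mp hs
    show rIn K L / (1 + t * rIn K L) ≤ supp K u / supp (L + t • K) u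
    rw [supp_add_smul hLc hLne hKc hKne ht u,
      div_le_div_iff₀ h1i (by nlinarith [mul_nonneg ht haK.le])]
    nlinarith [mul_nonneg ht haK.le, mul_nonneg (mul_nonneg ht hi0) haK.le]
  have hlow : rIn K L / (1 + t * rIn K L) ≤ r' := le_trans hrIn' hr'.1
  have hhigh : r' ≤ rOut K L / (1 + t * rOut K L) := le_trans hr'.2 hrOut'
  have hr'0 : 0 ≤ r' := le_trans (div_nonneg hi0 h1i.le) hlow
  have hA : r' * (1 + t * rOut K L) ≤ rOut K L := (le_div_iff₀ h1R).mp hhigh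
  have hd : 0 < 1 - t * r' := by nlinarith [mul_nonneg ht hr'0, mul_nonneg (mul_nonneg ht ht) (mul_nonneg hr'0 hR0)]
  set r := r' / (1 - t * r') with hrdef
  have hrd : r * (1 - t * r') = r' := div_mul_cancel₀ _ hd.ne'
  have hr_low : rIn K L ≤ r := by
    rw [hrdef, le_div_iff₀ hd]
    have := (div_le_iff₀ h1i).mp hlow
    nlinarith
  have hr_high : r ≤ rOut K L := by
    rw [hrdef, div_le_iff₀ hd]
    nlinarith
  have hB := hR1 r ⟨hr_low, hr_high⟩
  have hr0 : 0 ≤ r := le_trans hi0 hr_low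
  have h1r : (0:ℝ) < 1 + t * r := by nlinarith [mul_nonneg ht hr0]
  have hr'eq : r' = r / (1 + t * r) := by
    rw [eq_div_iff h1r.ne']
    linear_combination (-1 : ℝ) * hrd
  have hV : (volume K).toReal = W₀ := by
    have h0 := hW 0 le_rfl
    rw [Set.zero_smul_set hLne, add_zero] at h0
    linarith [h0]
  rw [hV, hr'eq]
  have key : 2 * (W₁ + t * W₀) * (r / (1 + t * r)) - W₀
      - (W₂ + 2 * t * W₁ + t ^ 2 * W₀) * (r / (1 + t * r)) ^ 2
      = (2 * W₁ * r - W₀ - W₂ * r ^ 2) / (1 + t * r) ^ 2 := by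
    field_simp
    ring
  rw [key]
  exact div_nonneg hB (by positivity)
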